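/- Let C be a Type II self-dual additive (10,2^10) code over GF(4) of minimum weight 4. Then ρ_B(C) = Ĉ + (d_4^{10})_0 + e_B is a doubly-even self-dual binary [40,20,8] code: it has 𝔽₂-dimension 20, equals its dual under the standard inner product on 𝔽₂^40, every codeword has weight divisible by 4, and its minimum nonzero Hamming weight is 8. -/

import Mathlib

open scoped BigOperators

section Defs

variable {F : Type} [Field F] [DecidableEq F]

/-- The binary coordinate in column `j` (0-indexed), row `k`. -/
def idx (j : Fin 10) (k : Fin 4) : Fin 40 :=
  ⟨4 * j.val + k.val, by have := j.isLt; have := k.isLt; omega⟩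

/-- The map φ : GF(4) → 𝔽₂⁴, 0↦0000, 1↦0011, ω↦0101, ϖ↦0110. -/
def phi (ω : F) : F → (Fin 4 → ZMod 2) := fun x =>
  if x = 0 then ![0, 0, 0, 0]
  else if x = 1 then ![0, 0, 1, 1]
  else if x = ω then ![0, 1, 0, 1]
  else ![0, 1, 1, 0]

/-- Ĉ : the image of a quaternary code under coordinatewise φ. -/
def hatSet (ω : F) (C : Set (Fin 10 → F)) : Set (Fin 40 → ZMod 2) :=
  { v | ∃ c ∈ C, ∀ (j : Fin 10) (k : Fin 4), v (idx j k) = phi ω (c j) k }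

/-- d₄¹⁰ : binary vectors of length 40 constant on each of the ten columns. -/
def d4ten : Set (Fin 40 → ZMod 2) :=
  { v | ∀ (j : Fin 10) (k k' : Fin 4), v (idx j k) = v (idx j k') }

/-- (d₄¹⁰)₀ : the subcode of d₄¹⁰ of codewords of weight divisible by 8. -/
def d4ten0 : Set (Fin 40 → ZMod 2) :=
  { v | v ∈ d4ten ∧ 8 ∣ hammingNorm v }

/-- The generator 1000 1000 ... 1000 of e_C. -/
def eCvec : Fin 40 → ZMod 2 := fun i => if i.val % 4 = 0 then 1 else 0

/-- The generator 1000 (×9) 0111 of e_B. -/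
def eBvec : Fin 40 → ZMod 2 := fun i =>
  if i.val < 36 then (if i.val % 4 = 0 then 1 else 0)
  else (if i.val % 4 = 0 then 0 else 1)

/-- ρ_C(C) = Ĉ + (d₄¹⁰)₀ + e_C. -/
def rhoC (ω : F) (C : Set (Fin 10 → F)) : Set (Fin 40 → ZMod 2) :=
  { v | ∃ a ∈ hatSet ω C, ∃ b ∈ d4ten0,
      ∃ e ∈ ({0, eCvec} : Set (Fin 40 → ZMod 2)), v = a + b + e }

/-- ρ_B(C) = Ĉ + (d₄¹⁰)₀ + e_B. -/
def rhoB (ω : F) (C : Set (Fin 10 → F)) : Set (Fin 40 → ZMod 2) :=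
  { v | ∃ a ∈ hatSet ω C, ∃ b ∈ d4ten0,
      ∃ e ∈ ({0, eBvec} : Set (Fin 40 → ZMod 2)), v = a + b + e }

/-- The trace inner product x⋆y = Σ Tr(xᵢ ȳᵢ), computed in GF(4) (its value lies
in the prime subfield GF(2)). -/
def traceIP (x y : Fin 10 → F) : F :=
  ∑ i, ((x i * (y i) ^ 2) + (x i * (y i) ^ 2) ^ 2)

/-- The dual of an additive code with respect to the trace inner product. -/
def addDual (C : Set (Fin 10 → F)) : Set (Fin 10 → F) :=
  { x | ∀ c ∈ C, traceIP x c = 0 }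

/-- The dual of a binary code of length 40 under the standard inner product. -/
def binDual (S : Set (Fin 40 → ZMod 2)) : Set (Fin 40 → ZMod 2) :=
  { x | ∀ c ∈ S, ∑ i, x i * c i = 0 }

/-- The dual of a quaternary code under the Hermitian inner product ⟨x,y⟩ = Σ xᵢ ȳᵢ. -/
def hermDual (S : Set (Fin 10 → F)) : Set (Fin 10 → F) :=
  { x | ∀ c ∈ S, ∑ i, x i * (c i) ^ 2 = 0 }

/-- The Hermitian self-dual [10,5,4] code E₁₀ over GF(4). -/
def E10 (ω : F) : Submodule F (Fin 10 → F) :=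
  Submodule.span F {![1,1,1,1,0,0,0,0,0,0], ![0,0,1,1,1,1,0,0,0,0],
    ![0,0,0,0,1,1,1,1,0,0], ![0,0,0,0,0,0,1,1,1,1],
    ![1,0,1,0,1,0,1,0,ω,ω^2]}

/-- The Hermitian self-dual [10,5,4] code B₁₀ over GF(4). -/
def B10 (ω : F) : Submodule F (Fin 10 → F) :=
  Submodule.span F {![1,1,1,1,0,0,0,0,0,0], ![0,1,ω,ω^2,1,0,0,0,0,0],
    ![0,0,0,0,0,1,1,1,1,0], ![0,0,0,0,0,0,1,ω,ω^2,1],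
    ![0,1,ω^2,ω,0,0,1,ω^2,ω,0]}

/-- Interpret a bit as an element of GF(4). -/
def b2f (x : ZMod 2) : F := if x = 1 then 1 else 0

/-- The projection 𝔽₂⁴⁰ → GF(4)¹⁰ : column j ↦ v₂ᵢₙ·1 + v·ω + v·ϖ with row labels 0,1,ω,ϖ. -/
def Proj (ω : F) (v : Fin 40 → ZMod 2) : Fin 10 → F := fun j =>
  b2f (v (idx j 1)) * 1 + b2f (v (idx j 2)) * ω + b2f (v (idx j 3)) * ω ^ 2

/-- The parity of column j (1 = odd number of ones). -/
def colPar (v : Fin 40 → ZMod 2) (j : Fin 10) : ZMod 2 := ∑ k, v (idx j k)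

/-- The parity of the top row (1 = odd number of ones). -/
def topPar (v : Fin 40 → ZMod 2) : ZMod 2 := ∑ j, v (idx j 0)

/-- The coordinate permutation of Fin 10 permuting the five blocks {2m, 2m+1}
as units according to π, preserving order within blocks. -/
def blockPerm (π : Equiv.Perm (Fin 5)) : Fin 10 → Fin 10 := fun t =>
  ⟨2 * (π ⟨t.val / 2, by have := t.isLt; omega⟩).val + t.val % 2, by
    have := (π ⟨t.val / 2, by have := t.isLt; omega⟩).isLt; have := t.isLt; omega⟩

/-- The coordinate permutation of Fin 10 interchanging the two coordinates within
each block belonging to S, fixing all other coordinates. -/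
def blockSwap (S : Finset (Fin 5)) : Fin 10 → Fin 10 := fun t =>
  if (⟨t.val / 2, by have := t.isLt; omega⟩ : Fin 5) ∈ S then
    ⟨2 * (t.val / 2) + (1 - t.val % 2), by have := t.isLt; omega⟩
  else t

end Defs

open Finset

lemma zmod2_cases (u : ZMod 2) : u = 0 ∨ u = 1 := by revert u; decide

lemma sum_zmod2_eq_card {ι : Type} [Fintype ι] [DecidableEq ι] (γ : ι → ZMod 2) :
    ∑ i, γ i = (((Finset.univ.filter fun i => γ i ≠ 0).card : ℕ) : ZMod 2) := by
  rw [Finset.card_filter, Nat.cast_sum]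
  apply Finset.sum_congr rfl; intro i _
  rcases zmod2_cases (γ i) with h|h <;> simp [h]

def colEquiv : Fin 10 × Fin 4 ≃ Fin 40 where
  toFun p := idx p.1 p.2
  invFun i := (⟨i.val / 4, by have := i.isLt; omega⟩, ⟨i.val % 4, by omega⟩)
  left_inv := by
    rintro ⟨j, k⟩
    have hj := j.isLt; have hk := k.isLt
    have h1 : (4 * j.val + k.val) / 4 = j.val := by omega
    have h2 : (4 * j.val + k.val) % 4 = k.val := by omega
    simp only [idx, Prod.mk.injEq]
    exact ⟨Fin.ext h1, Fin.ext h2⟩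
  right_inv := by
    intro i; ext; simp [idx]; omega

lemma sum40 {M : Type} [AddCommMonoid M] (f : Fin 40 → M) :
    ∑ i, f i = ∑ j : Fin 10, ∑ k : Fin 4, f (idx j k) := by
  rw [← (Fintype.sum_equiv colEquiv (fun p => f (idx p.1 p.2)) f (fun p => rfl)),
    Fintype.sum_prod_type]

lemma eq_idx (i : Fin 40) :
    i = idx ⟨i.val / 4, by have := i.isLt; omega⟩ ⟨i.val % 4, by omega⟩ := by
  ext; simp [idx]; omega

lemma hn_eq_sum {n : ℕ} {α : Type} [DecidableEq α] [Zero α] (v : Fin n → α) :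
    hammingNorm v = ∑ i, if v i ≠ 0 then 1 else 0 := by
  rw [hammingNorm, Finset.card_filter]

set_option linter.unusedSectionVars false
section FF
variable {F : Type} [Field F] [Fintype F] [DecidableEq F]

lemma two_eq_zero (hF : Fintype.card F = 4) : (2 : F) = 0 := by
  have h4 : ((4 : ℕ) : F) = 0 := by
    have := FiniteField.cast_card_eq_zero F
    rwa [hF] at this
  have : (2 : F) * 2 = 0 := by push_cast at h4; linear_combination h4
  rcases mul_eq_zero.mp this with h | h <;> exact h

lemma add_self_eq (hF : Fintype.card F = 4) (x : F) : x + x = 0 := by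
  have := two_eq_zero (F := F) hF
  linear_combination x * this

variable (ω : F) (hω : ω ^ 2 = ω + 1)
include hω

lemma omega_ne_zero (hF : Fintype.card F = 4) : ω ≠ 0 := by
  intro h; rw [h] at hω; simp at hω

lemma omega_ne_one (hF : Fintype.card F = 4) : ω ≠ 1 := by
  intro h; rw [h] at hω
  have h2 := two_eq_zero (F := F) hF
  have : (1 : F) = 0 := by linear_combination hω + h2
  exact one_ne_zero this

lemma omega_sq_ne_zero (hF : Fintype.card F = 4) : ω ^ 2 ≠ 0 :=
  pow_ne_zero 2 (omega_ne_zero ω hω hF)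

lemma omega_sq_ne_one (hF : Fintype.card F = 4) : ω ^ 2 ≠ 1 := by
  rw [hω]; intro h
  exact omega_ne_zero ω hω hF (by linear_combination h)

lemma omega_sq_ne_omega (hF : Fintype.card F = 4) : ω ^ 2 ≠ ω := by
  rw [hω]; intro h
  exact one_ne_zero (α := F) (by linear_combination h)

lemma elems (hF : Fintype.card F = 4) (x : F) : x = 0 ∨ x = 1 ∨ x = ω ∨ x = ω ^ 2 := by
  have h0 : ω ≠ 0 := omega_ne_zero ω hω hF
  have h1 : ω ≠ 1 := omega_ne_one ω hω hF
  have h2 : ω ^ 2 ≠ 0 := omega_sq_ne_zero ω hω hF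
  have h3 : ω ^ 2 ≠ 1 := omega_sq_ne_one ω hω hF
  have h4 : ω ^ 2 ≠ ω := omega_sq_ne_omega ω hω hF
  have hc : ({0, 1, ω, ω ^ 2} : Finset F) = Finset.univ := by
    apply Finset.eq_univ_of_card
    rw [hF]
    rw [Finset.card_insert_of_notMem (by simp [Ne.symm h0, Ne.symm h2, (one_ne_zero (α := F)).symm]),
        Finset.card_insert_of_notMem (by simp [Ne.symm h1, Ne.symm h3]),
        Finset.card_insert_of_notMem (by simp [Ne.symm h4]),
        Finset.card_singleton]
  have : x ∈ ({0, 1, ω, ω ^ 2} : Finset F) := hc ▸ Finset.mem_univ x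
  simpa using this

lemma omega_cube (hF : Fintype.card F = 4) : ω ^ 3 = 1 := by
  have h2 := two_eq_zero (F := F) hF
  have : ω ^ 3 = ω * ω ^ 2 := by ring
  rw [this, hω]
  linear_combination hω + ω * h2

-- addition table
lemma add_one_omega (hF : Fintype.card F = 4) : (1 : F) + ω = ω ^ 2 := by
  rw [hω]; ring

lemma add_one_omega_sq (hF : Fintype.card F = 4) : (1 : F) + ω ^ 2 = ω := by
  rw [hω]; linear_combination two_eq_zero (F := F) hF

lemma add_omega_omega_sq (hF : Fintype.card F = 4) : ω + ω ^ 2 = 1 := by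
  rw [hω]; linear_combination ω * two_eq_zero (F := F) hF

end FF

section Phi
set_option linter.unusedSectionVars false
open Finset
variable {F : Type} [Field F] [Fintype F] [DecidableEq F]
variable (ω : F) (hω : ω ^ 2 = ω + 1)

lemma phi_zero : phi ω (0 : F) = ![0, 0, 0, 0] := by simp [phi]

lemma phi_one : phi ω (1 : F) = ![0, 0, 1, 1] := by
  simp [phi, one_ne_zero]

include hω

lemma pow_mod3 (hF : Fintype.card F = 4) (n : ℕ) : ω ^ n = ω ^ (n % 3) := by
  conv_lhs => rw [← Nat.div_add_mod n 3, pow_add, pow_mul, omega_cube ω hω hF, one_pow, one_mul]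

lemma phi_omega (hF : Fintype.card F = 4) : phi ω ω = ![0, 1, 0, 1] := by
  simp [phi, omega_ne_zero ω hω hF, omega_ne_one ω hω hF]

lemma phi_omega_sq (hF : Fintype.card F = 4) : phi ω (ω ^ 2) = ![0, 1, 1, 0] := by
  simp [phi, omega_sq_ne_zero ω hω hF, omega_sq_ne_one ω hω hF, omega_sq_ne_omega ω hω hF]

end Phi

section Phi2
set_option linter.unusedSectionVars false
open Finset
variable {F : Type} [Field F] [Fintype F] [DecidableEq F]
variable (ω : F) (hω : ω ^ 2 = ω + 1) (hF : Fintype.card F = 4)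
include hω hF

lemma phi_fst (x : F) : phi ω x 0 = 0 := by
  rcases elems ω hω hF x with h|h|h|h <;> rw [h] <;>
    simp only [phi_zero, phi_one, phi_omega ω hω hF, phi_omega_sq ω hω hF] <;> decide

lemma phi_parity (x : F) : ∑ k, phi ω x k = 0 := by
  rcases elems ω hω hF x with h|h|h|h <;> rw [h] <;>
    simp only [phi_zero, phi_one, phi_omega ω hω hF, phi_omega_sq ω hω hF] <;> decide

lemma phi_eq_zero (x : F) (h : ∀ k, phi ω x k = 0) : x = 0 := by
  rcases elems ω hω hF x with hx|hx|hx|hx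
  · exact hx
  · rw [hx] at h; rw [phi_one] at h; exact absurd (h 2) (by decide)
  · rw [hx] at h; rw [phi_omega ω hω hF] at h; exact absurd (h 1) (by decide)
  · rw [hx] at h; rw [phi_omega_sq ω hω hF] at h; exact absurd (h 1) (by decide)

lemma phi_add (x y : F) : phi ω (x + y) = phi ω x + phi ω y := by
  have h2 := two_eq_zero (F := F) hF
  have c1 : (1 : F) + ω = ω ^ 2 := add_one_omega ω hω hF
  have c2 : (1 : F) + ω ^ 2 = ω := add_one_omega_sq ω hω hF
  have c3 : ω + ω ^ 2 = 1 := add_omega_omega_sq ω hω hF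
  have c1' : ω + (1 : F) = ω ^ 2 := by rw [add_comm]; exact c1
  have c2' : ω ^ 2 + (1 : F) = ω := by rw [add_comm]; exact c2
  have c3' : ω ^ 2 + ω = 1 := by rw [add_comm]; exact c3
  have sx : ∀ z : F, z + z = 0 := add_self_eq hF
  rcases elems ω hω hF x with hx|hx|hx|hx <;> rw [hx] <;>
    rcases elems ω hω hF y with hy|hy|hy|hy <;> rw [hy] <;>
    simp only [zero_add, add_zero, sx, c1, c2, c3, c1', c2', c3'] <;>
    simp only [phi_zero, phi_one, phi_omega ω hω hF, phi_omega_sq ω hω hF] <;>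
    decide

lemma Tsimp (x y : F) : x * y ^ 2 + (x * y ^ 2) ^ 2 =
    if x * y ^ 2 = 0 ∨ x * y ^ 2 = 1 then 0 else 1 := by
  have h2 := two_eq_zero (F := F) hF
  set t := x * y ^ 2 with htdef
  clear_value t
  rcases elems ω hω hF t with h|h|h|h <;> rw [h]
  · simp
  · rw [if_pos (Or.inr rfl)]; linear_combination h2
  · rw [if_neg (by push_neg; exact ⟨omega_ne_zero ω hω hF, omega_ne_one ω hω hF⟩)]
    linear_combination hω + ω * h2
  · rw [if_neg (by push_neg; exact ⟨omega_sq_ne_zero ω hω hF, omega_sq_ne_one ω hω hF⟩)]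
    have e4 : (ω ^ 2) ^ 2 = ω := by
      rw [show (ω ^ 2) ^ 2 = ω ^ 4 from by ring, pow_mod3 ω hω hF 4]; norm_num
    rw [e4]
    linear_combination hω + ω * h2

end Phi2

section Phi3
set_option linter.unusedSectionVars false
open Finset
variable {F : Type} [Field F] [Fintype F] [DecidableEq F]
variable (ω : F) (hω : ω ^ 2 = ω + 1) (hF : Fintype.card F = 4)

lemma phi_zero' (k : Fin 4) : phi ω (0 : F) k = 0 := by
  rw [phi_zero]; fin_cases k <;> rfl

include hω hF

lemma dotcol (x y : F) : ∑ k, phi ω x k * phi ω y k =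
    if x * y ^ 2 + (x * y ^ 2) ^ 2 = 1 then 1 else 0 := by
  have hz : ∀ y' : F, ∑ k, phi ω (0:F) k * phi ω y' k =
      if (0:F) * y' ^ 2 + ((0:F) * y' ^ 2) ^ 2 = 1 then 1 else 0 := by
    intro y'; simp [phi_zero']
  have hz' : ∀ x' : F, ∑ k, phi ω x' k * phi ω (0:F) k =
      if x' * (0:F) ^ 2 + (x' * (0:F) ^ 2) ^ 2 = 1 then 1 else 0 := by
    intro x'; simp [phi_zero']
  have hne1 : ¬((ω : F) = 0 ∨ ω = 1) := by
    push_neg; exact ⟨omega_ne_zero ω hω hF, omega_ne_one ω hω hF⟩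
  have hne2 : ¬((ω ^ 2 : F) = 0 ∨ ω ^ 2 = 1) := by
    push_neg; exact ⟨omega_sq_ne_zero ω hω hF, omega_sq_ne_one ω hω hF⟩
  have hcan : ∀ p : ℕ, ω ^ p = ω ^ (p % 3) := pow_mod3 ω hω hF
  rcases elems ω hω hF x with hx|hx|hx|hx <;> rw [hx] <;>
    rcases elems ω hω hF y with hy|hy|hy|hy <;> rw [hy]
  · exact hz 0
  · exact hz 1
  · exact hz ω
  · exact hz (ω ^ 2)
  · exact hz' 1
  · -- (1,1): t = 1
    have ht : (1 : F) * 1 ^ 2 = 1 := by ring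
    rw [Tsimp ω hω hF, ht, if_pos (Or.inr rfl), if_neg (zero_ne_one), phi_one]; decide
  · -- (1,ω): t = ω^2
    have ht : (1 : F) * ω ^ 2 = ω ^ 2 := by ring
    rw [Tsimp ω hω hF, ht, if_neg hne2, if_pos rfl, phi_one, phi_omega ω hω hF]; decide
  · -- (1,ω^2): t = ω^4 = ω
    have ht : (1 : F) * (ω ^ 2) ^ 2 = ω := by
      rw [show (1:F) * (ω ^ 2) ^ 2 = ω ^ 4 from by ring, hcan 4]; norm_num
    rw [Tsimp ω hω hF, ht, if_neg hne1, if_pos rfl, phi_one, phi_omega_sq ω hω hF]; decide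
  · exact hz' ω
  · -- (ω,1): t = ω
    have ht : ω * (1 : F) ^ 2 = ω := by ring
    rw [Tsimp ω hω hF, ht, if_neg hne1, if_pos rfl, phi_omega ω hω hF, phi_one]; decide
  · -- (ω,ω): t = ω^3 = 1
    have ht : ω * ω ^ 2 = 1 := by
      rw [show ω * ω ^ 2 = ω ^ 3 from by ring, hcan 3]; norm_num
    rw [Tsimp ω hω hF, ht, if_pos (Or.inr rfl), if_neg (zero_ne_one), phi_omega ω hω hF]; decide
  · -- (ω,ω^2): t = ω^5 = ω^2
    have ht : ω * (ω ^ 2) ^ 2 = ω ^ 2 := by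
      rw [show ω * (ω ^ 2) ^ 2 = ω ^ 5 from by ring, hcan 5]
    rw [Tsimp ω hω hF, ht, if_neg hne2, if_pos rfl, phi_omega ω hω hF, phi_omega_sq ω hω hF]
    decide
  · exact hz' (ω ^ 2)
  · -- (ω^2,1): t = ω^2
    have ht : ω ^ 2 * (1 : F) ^ 2 = ω ^ 2 := by ring
    rw [Tsimp ω hω hF, ht, if_neg hne2, if_pos rfl, phi_omega_sq ω hω hF, phi_one]; decide
  · -- (ω^2,ω): t = ω^4 = ω
    have ht : ω ^ 2 * ω ^ 2 = ω := by
      rw [show ω ^ 2 * ω ^ 2 = ω ^ 4 from by ring, hcan 4]; norm_num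
    rw [Tsimp ω hω hF, ht, if_neg hne1, if_pos rfl, phi_omega_sq ω hω hF, phi_omega ω hω hF]
    decide
  · -- (ω^2,ω^2): t = ω^6 = 1
    have ht : ω ^ 2 * (ω ^ 2) ^ 2 = 1 := by
      rw [show ω ^ 2 * (ω ^ 2) ^ 2 = ω ^ 6 from by ring, hcan 6]; norm_num
    rw [Tsimp ω hω hF, ht, if_pos (Or.inr rfl), if_neg (zero_ne_one), phi_omega_sq ω hω hF]
    decide

lemma wt4_phi (x : F) :
    (∑ k, if phi ω x k ≠ 0 then 1 else 0 : ℕ) = if x = 0 then 0 else 2 := by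
  rcases elems ω hω hF x with hx|hx|hx|hx <;> rw [hx]
  · rw [if_pos rfl, phi_zero]; decide
  · rw [if_neg one_ne_zero, phi_one]; decide
  · rw [if_neg (omega_ne_zero ω hω hF), phi_omega ω hω hF]; decide
  · rw [if_neg (omega_sq_ne_zero ω hω hF), phi_omega_sq ω hω hF]; decide

lemma wt4_phi_add (x : F) (β : ZMod 2) :
    (∑ k, if phi ω x k + β ≠ 0 then 1 else 0 : ℕ) =
      if x = 0 then (if β = 0 then 0 else 4) else 2 := by
  rcases elems ω hω hF x with hx|hx|hx|hx <;> rw [hx] <;>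
    rcases zmod2_cases β with hb|hb <;> rw [hb]
  · rw [if_pos rfl, if_pos rfl, phi_zero]; decide
  · rw [if_pos rfl, if_neg one_ne_zero, phi_zero]; decide
  · rw [if_neg one_ne_zero, phi_one]; decide
  · rw [if_neg one_ne_zero, phi_one]; decide
  · rw [if_neg (omega_ne_zero ω hω hF), phi_omega ω hω hF]; decide
  · rw [if_neg (omega_ne_zero ω hω hF), phi_omega ω hω hF]; decide
  · rw [if_neg (omega_sq_ne_zero ω hω hF), phi_omega_sq ω hω hF]; decide
  · rw [if_neg (omega_sq_ne_zero ω hω hF), phi_omega_sq ω hω hF]; decide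

end Phi3

section Decomp
set_option linter.unusedSectionVars false
open Finset
variable {F : Type} [Field F] [Fintype F] [DecidableEq F]

def hatF (ω : F) (c : Fin 10 → F) : Fin 40 → ZMod 2 :=
  fun i => phi ω (c (colEquiv.symm i).1) (colEquiv.symm i).2

def spread (β : Fin 10 → ZMod 2) : Fin 40 → ZMod 2 :=
  fun i => β (colEquiv.symm i).1

variable (ω : F)

lemma hatF_idx (c : Fin 10 → F) (j : Fin 10) (k : Fin 4) :
    hatF ω c (idx j k) = phi ω (c j) k := by
  have h : colEquiv.symm (idx j k) = (j, k) := colEquiv.symm_apply_apply (j, k)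
  rw [hatF, h]

lemma spread_idx (β : Fin 10 → ZMod 2) (j : Fin 10) (k : Fin 4) :
    spread β (idx j k) = β j := by
  have h : colEquiv.symm (idx j k) = (j, k) := colEquiv.symm_apply_apply (j, k)
  rw [spread, h]

lemma hatF_mem {C : Set (Fin 10 → F)} {c : Fin 10 → F} (hc : c ∈ C) :
    hatF ω c ∈ hatSet ω C :=
  ⟨c, hc, fun j k => hatF_idx ω c j k⟩

lemma hat_eq {C : Set (Fin 10 → F)} {a : Fin 40 → ZMod 2} (ha : a ∈ hatSet ω C) :
    ∃ c ∈ C, a = hatF ω c := by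
  obtain ⟨c, hc, h⟩ := ha
  exact ⟨c, hc, funext fun i => by rw [eq_idx i, h, hatF_idx]⟩

lemma spread_mem_d4ten (β : Fin 10 → ZMod 2) : spread β ∈ d4ten := by
  intro j k k'; rw [spread_idx, spread_idx]

lemma d4_eq {b : Fin 40 → ZMod 2} (hb : b ∈ d4ten) :
    b = spread (fun j => b (idx j 0)) := by
  funext i
  rw [eq_idx i, spread_idx]
  exact hb _ _ 0

lemma wt_spread (β : Fin 10 → ZMod 2) :
    hammingNorm (spread β) = 4 * (univ.filter fun j => β j ≠ 0).card := by
  rw [hn_eq_sum, sum40, Finset.card_filter, Finset.mul_sum]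
  apply Finset.sum_congr rfl; intro j _
  simp only [spread_idx]
  rw [Finset.sum_const, Finset.card_univ]
  rcases zmod2_cases (β j) with h|h <;> simp [h]

lemma wt_spread_dvd8_iff (β : Fin 10 → ZMod 2) :
    (8 ∣ hammingNorm (spread β)) ↔ (∑ j, β j = 0) := by
  rw [wt_spread, sum_zmod2_eq_card, ZMod.natCast_eq_zero_iff]
  constructor <;> intro h <;> omega

lemma wt_hatF (hω : ω ^ 2 = ω + 1) (hF : Fintype.card F = 4) (c : Fin 10 → F) :
    hammingNorm (hatF ω c) = 2 * hammingNorm c := by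
  rw [hn_eq_sum, sum40, hn_eq_sum, Finset.mul_sum]
  apply Finset.sum_congr rfl; intro j _
  simp only [hatF_idx]
  rw [wt4_phi ω hω hF]
  by_cases h : c j = 0 <;> simp [h]

lemma eB_idx (j : Fin 10) (k : Fin 4) :
    eBvec (idx j k) = if j.val < 9 then (if k.val = 0 then 1 else 0)
      else (if k.val = 0 then 0 else 1) := by
  have hj := j.isLt; have hk := k.isLt
  simp only [eBvec, idx, Fin.val_mk]
  have h1 : (4 * j.val + k.val < 36) ↔ j.val < 9 := by omega
  have h2 : ((4 * j.val + k.val) % 4 = 0) ↔ k.val = 0 := by omega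
  simp only [h1, h2]

lemma eB_col_parity (j : Fin 10) : ∑ k, eBvec (idx j k) = 1 := by
  simp only [eB_idx]
  by_cases hj : j.val < 9 <;> rw [Fin.sum_univ_four] <;> simp [hj] <;> decide

lemma eB_fst (j : Fin 10) : eBvec (idx j 0) = if j.val < 9 then 1 else 0 := by
  rw [eB_idx]; norm_num

lemma wt_eB : hammingNorm eBvec = 12 := by decide

lemma zero_mem_d4ten0 : (0 : Fin 40 → ZMod 2) ∈ d4ten0 :=
  ⟨fun _ _ _ => rfl, by rw [hammingNorm_zero]; exact ⟨0, rfl⟩⟩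

end Decomp

section Orth
set_option linter.unusedSectionVars false
open Finset
variable {F : Type} [Field F] [Fintype F] [DecidableEq F]
variable (ω : F)

lemma mem_rhoB_iff {C : Set (Fin 10 → F)} {v : Fin 40 → ZMod 2} :
    v ∈ rhoB ω C ↔ ∃ c ∈ C, ∃ β : Fin 10 → ZMod 2, (∑ j, β j = 0) ∧
      ∃ e, (e = 0 ∨ e = eBvec) ∧ v = hatF ω c + spread β + e := by
  constructor
  · rintro ⟨a, ha, b, hb, e, he, rfl⟩
    obtain ⟨c, hc, rfl⟩ := hat_eq ω ha
    have hbe := d4_eq hb.1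
    set β := fun j => b (idx j 0) with hβ
    refine ⟨c, hc, β, ?_, e, ?_, by rw [← hbe]⟩
    · rw [← wt_spread_dvd8_iff, ← hbe]; exact hb.2
    · simpa using he
  · rintro ⟨c, hc, β, hβ, e, he, rfl⟩
    refine ⟨hatF ω c, hatF_mem ω hc, spread β, ⟨spread_mem_d4ten β, ?_⟩, e, ?_, rfl⟩
    · rw [wt_spread_dvd8_iff]; exact hβ
    · simpa using he

lemma parity_bridge (h2 : (2 : F) = 0) (T : Fin 10 → F) (hT : ∀ j, T j = 0 ∨ T j = 1)
    (h : ∑ j, T j = 0) : (∑ j, if T j = 1 then (1 : ZMod 2) else 0) = 0 := by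
  set s := univ.filter fun j => T j = 1 with hs
  have hFsum : ∑ j, T j = (s.card : F) := by
    rw [hs, Finset.card_filter, Nat.cast_sum]
    refine Finset.sum_congr rfl fun j _ => ?_
    rcases hT j with h'|h' <;> simp [h', zero_ne_one]
  have hcard : (s.card : F) = 0 := by rw [← hFsum]; exact h
  have hpar : s.card % 2 = 0 := by
    by_contra hodd
    have h1 : s.card % 2 = 1 := by omega
    have hx : ((s.card : ℕ) : F) = 1 := by
      conv_lhs => rw [← Nat.div_add_mod s.card 2, h1]
      push_cast
      rw [h2]
      ring
    rw [hx] at hcard; exact one_ne_zero hcard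
  have hz : (∑ j, if T j = 1 then (1 : ZMod 2) else 0) = (s.card : ZMod 2) := by
    rw [hs, Finset.card_filter, Nat.cast_sum]
    refine Finset.sum_congr rfl fun j _ => ?_
    by_cases h' : T j = 1 <;> simp [h']
  rw [hz, ZMod.natCast_eq_zero_iff]
  omega

variable (hω : ω ^ 2 = ω + 1) (hF : Fintype.card F = 4)
include hω hF

lemma dot_hat_hat {c c' : Fin 10 → F} (h : traceIP c c' = 0) :
    ∑ i, hatF ω c i * hatF ω c' i = 0 := by
  rw [sum40]
  have : ∀ j : Fin 10, ∑ k, hatF ω c (idx j k) * hatF ω c' (idx j k) =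
      if c j * c' j ^ 2 + (c j * c' j ^ 2) ^ 2 = 1 then (1 : ZMod 2) else 0 := by
    intro j
    simp only [hatF_idx]
    exact dotcol ω hω hF (c j) (c' j)
  rw [Finset.sum_congr rfl fun j _ => this j]
  apply parity_bridge (two_eq_zero hF)
  · intro j
    rw [Tsimp ω hω hF]
    split_ifs <;> [left; right] <;> rfl
  · exact h

lemma dot_hat_spread (c : Fin 10 → F) (β : Fin 10 → ZMod 2) :
    ∑ i, hatF ω c i * spread β i = 0 := by
  rw [sum40]
  apply Finset.sum_eq_zero; intro j _
  simp only [hatF_idx, spread_idx]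
  rw [← Finset.sum_mul, phi_parity ω hω hF, zero_mul]

lemma dot_hat_eB (c : Fin 10 → F) : ∑ i, hatF ω c i * eBvec i = 0 := by
  rw [sum40]
  apply Finset.sum_eq_zero; intro j _
  have hp := phi_parity ω hω hF (c j)
  rw [Fin.sum_univ_four] at hp
  have h0 := phi_fst ω hω hF (c j)
  rw [Fin.sum_univ_four]
  simp only [hatF_idx, eB_idx]
  by_cases hj : j.val < 9 <;>
    simp only [hj, if_true, if_false, show ((0:Fin 4)).val = 0 from rfl,
      show ((1:Fin 4)).val = 1 from rfl, show ((2:Fin 4)).val = 2 from rfl,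
      show ((3:Fin 4)).val = 3 from rfl] <;>
    norm_num <;>
    [skip; linear_combination hp - h0]
  rw [h0]
end Orth

section Orth2
set_option linter.unusedSectionVars false
open Finset
variable {F : Type} [Field F] [Fintype F] [DecidableEq F]
variable (ω : F)

lemma dot_spread_spread (β β' : Fin 10 → ZMod 2) :
    ∑ i, spread β i * spread β' i = 0 := by
  rw [sum40]
  apply Finset.sum_eq_zero; intro j _
  simp only [spread_idx]
  rw [Fin.sum_univ_four]
  have : ∀ u : ZMod 2, u + u + u + u = 0 := by decide
  exact this _

lemma dot_spread_eB (β : Fin 10 → ZMod 2) (hβ : ∑ j, β j = 0) :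
    ∑ i, spread β i * eBvec i = 0 := by
  rw [sum40]
  have : ∀ j : Fin 10, ∑ k, spread β (idx j k) * eBvec (idx j k) = β j := by
    intro j
    simp only [spread_idx]
    rw [← Finset.mul_sum, eB_col_parity, mul_one]
  rw [Finset.sum_congr rfl fun j _ => this j]
  exact hβ

lemma dot_eB_eB : ∑ i, eBvec i * eBvec i = 0 := by decide

variable (hω : ω ^ 2 = ω + 1) (hF : Fintype.card F = 4)
include hω hF

lemma dot_rhoB {C : Set (Fin 10 → F)}
    (htr : ∀ c ∈ C, ∀ c' ∈ C, traceIP c c' = 0)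
    {v w : Fin 40 → ZMod 2} (hv : v ∈ rhoB ω C) (hw : w ∈ rhoB ω C) :
    ∑ i, v i * w i = 0 := by
  obtain ⟨c, hc, β, hβ, e, he, rfl⟩ := (mem_rhoB_iff ω).mp hv
  obtain ⟨c', hc', β', hβ', e', he', rfl⟩ := (mem_rhoB_iff ω).mp hw
  have comm : ∀ x y : Fin 40 → ZMod 2, ∑ i, x i * y i = ∑ i, y i * x i := by
    intro x y; apply Finset.sum_congr rfl; intro i _; rw [mul_comm]
  have he2 : ∀ c'' : Fin 10 → F, ∑ i, hatF ω c'' i * e' i = 0 := by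
    intro c''; rcases he' with h|h <;> rw [h]
    · simp
    · exact dot_hat_eB ω hω hF c''
  have he1 : ∀ c'' : Fin 10 → F, ∑ i, e i * hatF ω c'' i = 0 := by
    intro c''; rw [comm]; rcases he with h|h <;> rw [h]
    · simp
    · exact dot_hat_eB ω hω hF c''
  have hse2 : ∑ i, spread β i * e' i = 0 := by
    rcases he' with h|h <;> rw [h]
    · simp
    · exact dot_spread_eB β hβ
  have hse1 : ∑ i, e i * spread β' i = 0 := by
    rw [comm]; rcases he with h|h <;> rw [h]
    · simp
    · exact dot_spread_eB β' hβ'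
  have hee : ∑ i, e i * e' i = 0 := by
    rcases he with h|h <;> rcases he' with h'|h' <;> rw [h, h'] <;>
      first | simp | exact dot_eB_eB
  have h11 : ∑ i, hatF ω c i * hatF ω c' i = 0 :=
    dot_hat_hat ω hω hF (htr c hc c' hc')
  have h12 : ∑ i, hatF ω c i * spread β' i = 0 := dot_hat_spread ω hω hF c β'
  have h21 : ∑ i, spread β i * hatF ω c' i = 0 := by
    rw [comm]; exact dot_hat_spread ω hω hF c' β
  have h22 : ∑ i, spread β i * spread β' i = 0 := dot_spread_spread β β'
  simp only [Pi.add_apply, add_mul, mul_add, Finset.sum_add_distrib]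
  rw [h11, h12, h21, h22, he2 c, hse2, he1 c', hse1, hee]
  norm_num
end Orth2

section Weights
set_option linter.unusedSectionVars false
open Finset
variable {F : Type} [Field F] [Fintype F] [DecidableEq F]

lemma hn_filter {n : ℕ} (x : Fin n → ZMod 2) :
    hammingNorm x = (univ.filter fun i => x i ≠ 0).card := rfl

lemma wt_add_four {n : ℕ} (x y : Fin n → ZMod 2) (hd : ∑ i, x i * y i = 0)
    (hx : 4 ∣ hammingNorm x) (hy : 4 ∣ hammingNorm y) : 4 ∣ hammingNorm (x + y) := by
  classical
  set A := univ.filter (fun i => x i ≠ 0) with hA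
  set B := univ.filter (fun i => y i ≠ 0) with hB
  have hxA : hammingNorm x = A.card := rfl
  have hyB : hammingNorm y = B.card := rfl
  have hS : (univ.filter fun i => (x + y) i ≠ 0) = (A ∪ B) \ (A ∩ B) := by
    ext i
    simp only [hA, hB, Finset.mem_sdiff, Finset.mem_union, Finset.mem_inter,
      Finset.mem_filter, Finset.mem_univ, true_and, Pi.add_apply]
    rcases zmod2_cases (x i) with h|h <;> rcases zmod2_cases (y i) with h'|h' <;>
      rw [h, h'] <;> decide
  have hsub1 : (A ∩ B) ⊆ (A ∪ B) := (Finset.inter_subset_left).trans Finset.subset_union_left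
  have hc1 : ((A ∪ B) \ (A ∩ B)).card + (A ∩ B).card = (A ∪ B).card :=
    Finset.card_sdiff_add_card_eq_card hsub1
  have hc2 : (A ∪ B).card + (A ∩ B).card = A.card + B.card :=
    Finset.card_union_add_card_inter A B
  have hdot : (2 : ℕ) ∣ (A ∩ B).card := by
    have hint : A ∩ B = univ.filter fun i => x i ≠ 0 ∧ y i ≠ 0 := by
      ext i; simp [hA, hB, Finset.mem_inter, and_assoc]
    have hcast : ∑ i, x i * y i = (((A ∩ B).card : ℕ) : ZMod 2) := by
      rw [hint, Finset.card_filter, Nat.cast_sum]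
      refine Finset.sum_congr rfl fun i _ => ?_
      rcases zmod2_cases (x i) with h|h <;> rcases zmod2_cases (y i) with h'|h' <;>
        rw [h, h'] <;> decide
    rw [← ZMod.natCast_eq_zero_iff, ← hcast]
    exact hd
  have hxy : hammingNorm (x + y) = ((A ∪ B) \ (A ∩ B)).card := by
    rw [hn_filter, hS]
  omega

lemma hatF_zero : hatF ω (0 : Fin 10 → F) = 0 := by
  funext i
  rw [hatF]
  exact phi_zero' ω _

lemma spread_zero : spread (0 : Fin 10 → ZMod 2) = 0 := rfl

variable (ω : F) (hω : ω ^ 2 = ω + 1) (hF : Fintype.card F = 4)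
include hω hF

lemma rhoB_doubly_even {C : Set (Fin 10 → F)}
    (htr : ∀ c ∈ C, ∀ c' ∈ C, traceIP c c' = 0)
    (hII : ∀ c ∈ C, Even (hammingNorm c))
    {v : Fin 40 → ZMod 2} (hv : v ∈ rhoB ω C) : 4 ∣ hammingNorm v := by
  obtain ⟨c, hc, β, hβ, e, he, rfl⟩ := (mem_rhoB_iff ω).mp hv
  have ha4 : 4 ∣ hammingNorm (hatF ω c) := by
    rw [wt_hatF ω hω hF]
    obtain ⟨m, hm⟩ := hII c hc
    exact ⟨m, by omega⟩
  have hb8 : 4 ∣ hammingNorm (spread β) := by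
    have := (wt_spread_dvd8_iff β).mpr hβ
    omega
  have hab : 4 ∣ hammingNorm (hatF ω c + spread β) :=
    wt_add_four _ _ (dot_hat_spread ω hω hF c β) ha4 hb8
  have he4 : 4 ∣ hammingNorm e := by
    rcases he with h|h <;> rw [h]
    · rw [hammingNorm_zero]; omega
    · rw [wt_eB]; omega
  apply wt_add_four _ _ ?_ hab he4
  have h1 : ∑ i, hatF ω c i * e i = 0 := by
    rcases he with h|h <;> rw [h]
    · simp
    · exact dot_hat_eB ω hω hF c
  have h2 : ∑ i, spread β i * e i = 0 := by
    rcases he with h|h <;> rw [h]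
    · simp
    · exact dot_spread_eB β hβ
  simp only [Pi.add_apply, add_mul, Finset.sum_add_distrib]
  rw [h1, h2, add_zero]

lemma rhoB_min_weight {C : Set (Fin 10 → F)}
    (hminlb : ∀ c ∈ C, c ≠ 0 → 4 ≤ hammingNorm c)
    {v : Fin 40 → ZMod 2} (hv : v ∈ rhoB ω C) (hv0 : v ≠ 0) :
    8 ≤ hammingNorm v := by
  obtain ⟨c, hc, β, hβ, e, he, rfl⟩ := (mem_rhoB_iff ω).mp hv
  rcases he with he|he
  · -- e = 0
    subst he
    rw [add_zero] at hv0 ⊢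
    by_cases hc0 : c = 0
    · subst hc0
      rw [hatF_zero, zero_add] at hv0 ⊢
      have h8 : 8 ∣ hammingNorm (spread β) := (wt_spread_dvd8_iff β).mpr hβ
      have hne : hammingNorm (spread β) ≠ 0 := hammingNorm_ne_zero_iff.mpr hv0
      omega
    · have hwt : hammingNorm (hatF ω c + spread β) =
          ∑ j, (if c j = 0 then (if β j = 0 then 0 else 4) else 2) := by
        rw [hn_eq_sum, sum40]
        refine Finset.sum_congr rfl fun j _ => ?_
        have : ∀ k : Fin 4, (hatF ω c + spread β) (idx j k) = phi ω (c j) k + β j := by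
          intro k; rw [Pi.add_apply, hatF_idx, spread_idx]
        rw [Finset.sum_congr rfl fun k _ => by rw [this k]]
        exact wt4_phi_add ω hω hF (c j) (β j)
      have hlow : ∀ j : Fin 10, 2 * (if c j ≠ 0 then 1 else 0) ≤
          (if c j = 0 then (if β j = 0 then 0 else 4) else 2) := by
        intro j; by_cases h : c j = 0 <;> simp [h] <;> split_ifs <;> omega
      have hsum : 2 * hammingNorm c ≤ hammingNorm (hatF ω c + spread β) := by
        rw [hwt, hn_eq_sum, Finset.mul_sum]
        exact Finset.sum_le_sum fun j _ => hlow j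
      have := hminlb c hc hc0
      omega
  · -- e = eB
    subst he
    have hcol : ∀ j : Fin 10, (1 : ℕ) ≤ ∑ k, if (hatF ω c + spread β + eBvec) (idx j k) ≠ 0 then 1 else 0 := by
      intro j
      by_contra hcon
      have h0 : ∑ k, (if (hatF ω c + spread β + eBvec) (idx j k) ≠ 0 then 1 else 0 : ℕ) = 0 := by omega
      have hall : ∀ k : Fin 4, (hatF ω c + spread β + eBvec) (idx j k) = 0 := by
        intro k
        have := (Finset.sum_eq_zero_iff.mp h0) k (Finset.mem_univ k)
        by_contra hne
        rw [if_pos hne] at this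
        omega
      have hparsum : ∑ k, (hatF ω c + spread β + eBvec) (idx j k) = 1 := by
        have hterm : ∀ k : Fin 4, (hatF ω c + spread β + eBvec) (idx j k) =
            phi ω (c j) k + β j + eBvec (idx j k) := by
          intro k; rw [Pi.add_apply, Pi.add_apply, hatF_idx, spread_idx]
        rw [Finset.sum_congr rfl fun k _ => hterm k]
        rw [Finset.sum_add_distrib, Finset.sum_add_distrib, phi_parity ω hω hF,
          eB_col_parity, Finset.sum_const, Finset.card_univ]
        have : ∀ u : ZMod 2, (Fintype.card (Fin 4)) • u = 0 := by decide
        rw [this (β j)]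
        decide
      rw [Finset.sum_congr rfl fun k _ => hall k] at hparsum
      simp at hparsum
    have : hammingNorm (hatF ω c + spread β + eBvec) =
        ∑ j : Fin 10, ∑ k, if (hatF ω c + spread β + eBvec) (idx j k) ≠ 0 then 1 else 0 := by
      rw [hn_eq_sum, sum40]
    rw [this]
    calc (8 : ℕ) ≤ ∑ _j : Fin 10, 1 := by simp
      _ ≤ _ := Finset.sum_le_sum fun j _ => hcol j

lemma rhoB_exists_eight {C : Set (Fin 10 → F)}
    (hminex : ∃ c ∈ C, hammingNorm c = 4) :
    ∃ v ∈ rhoB ω C, hammingNorm v = 8 := by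
  obtain ⟨c, hc, hwt⟩ := hminex
  refine ⟨hatF ω c, ?_, ?_⟩
  · rw [mem_rhoB_iff ω]
    exact ⟨c, hc, 0, by simp, 0, Or.inl rfl, by rw [spread_zero, add_zero, add_zero]⟩
  · rw [wt_hatF ω hω hF, hwt]

end Weights

section Count
set_option linter.unusedSectionVars false
open Finset
variable {F : Type} [Field F] [Fintype F] [DecidableEq F]
variable (ω : F)

lemma hatF_add (hω : ω ^ 2 = ω + 1) (hF : Fintype.card F = 4) (c c' : Fin 10 → F) :
    hatF ω (c + c') = hatF ω c + hatF ω c' := by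
  funext i
  rw [Pi.add_apply, hatF, hatF, hatF, Pi.add_apply, phi_add ω hω hF]
  rfl

lemma spread_add (β β' : Fin 10 → ZMod 2) :
    spread (β + β') = spread β + spread β' := rfl

def gmap (ω : F) (p : (Fin 10 → F) × (Fin 10 → ZMod 2) × Bool) : Fin 40 → ZMod 2 :=
  hatF ω p.1 + spread p.2.1 + (if p.2.2 then eBvec else 0)

lemma colsum_e (c : Fin 10 → F) (hω : ω ^ 2 = ω + 1) (hF : Fintype.card F = 4)
    (β : Fin 10 → ZMod 2) (e : Fin 40 → ZMod 2) (j : Fin 10) :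
    ∑ k, (hatF ω c + spread β + e) (idx j k) = ∑ k, e (idx j k) := by
  have hterm : ∀ k : Fin 4, (hatF ω c + spread β + e) (idx j k) =
      phi ω (c j) k + β j + e (idx j k) := by
    intro k; rw [Pi.add_apply, Pi.add_apply, hatF_idx, spread_idx]
  rw [Finset.sum_congr rfl fun k _ => hterm k, Finset.sum_add_distrib,
    Finset.sum_add_distrib, phi_parity ω hω hF, Finset.sum_const, Finset.card_univ]
  have h4 : ∀ u : ZMod 2, (Fintype.card (Fin 4)) • u = 0 := by decide
  rw [h4 (β j)]
  simp

lemma rhoB_eq_image {C : Set (Fin 10 → F)} :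
    rhoB ω C = gmap ω '' (C ×ˢ ({β | ∑ j, β j = 0} ×ˢ (Set.univ : Set Bool))) := by
  ext v
  rw [mem_rhoB_iff ω]
  constructor
  · rintro ⟨c, hc, β, hβ, e, he, rfl⟩
    rcases he with he|he <;> subst he
    · exact ⟨(c, β, false), ⟨hc, hβ, trivial⟩, rfl⟩
    · exact ⟨(c, β, true), ⟨hc, hβ, trivial⟩, rfl⟩
  · rintro ⟨⟨c, β, ε⟩, ⟨hc, hβ, -⟩, rfl⟩
    cases ε
    · exact ⟨c, hc, β, hβ, 0, Or.inl rfl, rfl⟩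
    · exact ⟨c, hc, β, hβ, eBvec, Or.inr rfl, rfl⟩

lemma gmap_injOn (hω : ω ^ 2 = ω + 1) (hF : Fintype.card F = 4) {C : Set (Fin 10 → F)} :
    Set.InjOn (gmap ω) (C ×ˢ ({β | ∑ j, β j = 0} ×ˢ (Set.univ : Set Bool))) := by
  rintro ⟨c, β, ε⟩ ⟨hc, hβ, -⟩ ⟨c', β', ε'⟩ ⟨hc', hβ', -⟩ heq
  simp only [gmap] at heq
  have h2 := two_eq_zero (F := F) hF
  -- step 1 : ε = ε'
  have hpar : ∀ j : Fin 10, (∑ k, (if ε then eBvec else 0) (idx j k) : ZMod 2) =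
      ∑ k, (if ε' then eBvec else 0) (idx j k) := by
    intro j
    calc ∑ k, (if ε then eBvec else 0) (idx j k)
        = ∑ k, (hatF ω c + spread β + if ε then eBvec else 0) (idx j k) :=
          (colsum_e ω c hω hF β _ j).symm
      _ = ∑ k, (hatF ω c' + spread β' + if ε' then eBvec else 0) (idx j k) := by rw [heq]
      _ = ∑ k, (if ε' then eBvec else 0) (idx j k) := colsum_e ω c' hω hF β' _ j
  have hone : (∑ k, eBvec (idx 0 k)) = 1 := eB_col_parity 0
  have hz0 : (∑ k, (0 : Fin 40 → ZMod 2) (idx 0 k)) = 0 := by simp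
  have hee : ε = ε' := by
    have h := hpar 0
    cases ε <;> cases ε'
    · rfl
    · rw [if_neg (by simp), if_pos rfl, hz0, hone] at h; exact absurd h (by decide)
    · rw [if_pos rfl, if_neg (by simp), hone, hz0] at h; exact absurd h (by decide)
    · rfl
  subst hee
  have hab : hatF ω c + spread β = hatF ω c' + spread β' := add_right_cancel heq
  have hβ2 : β = β' := by
    funext j
    have h := congrFun hab (idx j 0)
    rw [Pi.add_apply, Pi.add_apply, hatF_idx, spread_idx, hatF_idx, spread_idx,
      phi_fst ω hω hF, phi_fst ω hω hF, zero_add, zero_add] at h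
    exact h
  subst hβ2
  have hcc : c = c' := by
    have hh : hatF ω c = hatF ω c' := add_right_cancel hab
    funext j
    have hk : ∀ k, phi ω (c j) k = phi ω (c' j) k := by
      intro k
      have := congrFun hh (idx j k)
      rwa [hatF_idx, hatF_idx] at this
    have hzero : ∀ k, phi ω (c j + c' j) k = 0 := by
      intro k
      rw [phi_add ω hω hF, Pi.add_apply, hk k]
      exact (by decide : ∀ u : ZMod 2, u + u = 0) _
    have hs := phi_eq_zero ω hω hF _ hzero
    linear_combination hs - c' j * h2
  subst hcc
  rfl

end Count

section Card2
set_option linter.unusedSectionVars false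
open Finset
variable {F : Type} [Field F] [Fintype F] [DecidableEq F]
variable (ω : F)

def Kset : Set (Fin 10 → ZMod 2) := {β | ∑ j, β j = 0}

noncomputable def Kequiv : ↥(Kset) ≃ (Fin 9 → ZMod 2) where
  toFun b := fun i => b.1 i.castSucc
  invFun h := ⟨Fin.snoc h (∑ i, h i), by
    have : ∑ j : Fin 10, Fin.snoc h (∑ i, h i) j = ∑ i : Fin 9, h i + ∑ i : Fin 9, h i := by
      rw [Fin.sum_univ_castSucc]
      simp only [Fin.snoc_castSucc, Fin.snoc_last]
    simp only [Kset, Set.mem_setOf_eq, this]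
    exact (by decide : ∀ u : ZMod 2, u + u = 0) _⟩
  left_inv := by
    rintro ⟨b, hb⟩
    ext j
    simp only
    refine Fin.lastCases ?_ ?_ j
    · rw [Fin.snoc_last]
      have hb' : ∑ j : Fin 10, b j = 0 := hb
      rw [Fin.sum_univ_castSucc] at hb'
      have : ∀ u v : ZMod 2, u + v = 0 → u = v := by decide
      exact this _ _ hb'
    · intro i; rw [Fin.snoc_castSucc]
  right_inv := by
    intro h; funext i; simp [Fin.snoc_castSucc]

lemma card_rhoB (hω : ω ^ 2 = ω + 1) (hF : Fintype.card F = 4)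
    {C : Set (Fin 10 → F)} (hcard : Nat.card C = 2 ^ 10) :
    Nat.card (rhoB ω C) = 2 ^ 20 := by
  rw [Nat.card_coe_set_eq, rhoB_eq_image ω,
    Set.ncard_image_of_injOn (gmap_injOn ω hω hF), ← Nat.card_coe_set_eq]
  rw [Nat.card_congr (Equiv.Set.prod _ _), Nat.card_prod,
    Nat.card_congr (Equiv.Set.prod _ _), Nat.card_prod]
  have h1 : Nat.card ↥({β : Fin 10 → ZMod 2 | ∑ j, β j = 0}) = 2 ^ 9 := by
    have : ({β : Fin 10 → ZMod 2 | ∑ j, β j = 0}) = Kset := rfl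
    rw [this, Nat.card_congr (Kequiv), Nat.card_eq_fintype_card]
    simp [ZMod.card]
  have h2 : Nat.card ↥(Set.univ : Set Bool) = 2 := by
    rw [Nat.card_congr (Equiv.Set.univ Bool), Nat.card_eq_fintype_card]
    rfl
  rw [hcard, h1, h2]; norm_num

end Card2

section Final
set_option linter.unusedSectionVars false
open Finset
variable {F : Type} [Field F] [Fintype F] [DecidableEq F]
variable (ω : F)

lemma rhoB_add_mem (hω : ω ^ 2 = ω + 1) (hF : Fintype.card F = 4) {C : Set (Fin 10 → F)}
    (hadd : ∀ u ∈ C, ∀ v ∈ C, u + v ∈ C)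
    {v w : Fin 40 → ZMod 2} (hv : v ∈ rhoB ω C) (hw : w ∈ rhoB ω C) :
    v + w ∈ rhoB ω C := by
  rw [mem_rhoB_iff ω] at hv hw ⊢
  obtain ⟨c, hc, β, hβ, e, he, rfl⟩ := hv
  obtain ⟨c', hc', β', hβ', e', he', rfl⟩ := hw
  refine ⟨c + c', hadd c hc c' hc', β + β', ?_, e + e', ?_, ?_⟩
  · simp only [Pi.add_apply]
    rw [Finset.sum_add_distrib, hβ, hβ', add_zero]
  · rcases he with h|h <;> rcases he' with h'|h' <;> subst h <;> subst h'
    · left; rw [add_zero]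
    · right; rw [zero_add]
    · right; rw [add_zero]
    · left; funext i; exact (by decide : ∀ u : ZMod 2, u + u = 0) _
  · rw [hatF_add ω hω hF, spread_add]; abel

lemma rhoB_zero_mem {C : Set (Fin 10 → F)} (hzero : (0 : Fin 10 → F) ∈ C) :
    (0 : Fin 40 → ZMod 2) ∈ rhoB ω C := by
  rw [mem_rhoB_iff ω]
  exact ⟨0, hzero, 0, by simp, 0, Or.inl rfl, by rw [hatF_zero, spread_zero, add_zero, add_zero]⟩

def dotB : LinearMap.BilinForm (ZMod 2) (Fin 40 → ZMod 2) :=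
  LinearMap.mk₂ (ZMod 2) (fun x y => ∑ i, x i * y i)
    (fun x x' y => by simp [add_mul, Finset.sum_add_distrib])
    (fun r x y => by
      simp only [Pi.smul_apply, smul_eq_mul, Finset.mul_sum]
      exact Finset.sum_congr rfl fun i _ => by ring)
    (fun x y y' => by simp [mul_add, Finset.sum_add_distrib])
    (fun r x y => by
      simp only [Pi.smul_apply, smul_eq_mul, Finset.mul_sum]
      exact Finset.sum_congr rfl fun i _ => by ring)

lemma dotB_apply (x y : Fin 40 → ZMod 2) : dotB x y = ∑ i, x i * y i := rfl

lemma dotB_refl : (dotB).IsRefl := by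
  intro x y h
  rw [dotB_apply] at h ⊢
  rw [← h]
  exact Finset.sum_congr rfl fun i _ => mul_comm _ _

lemma dotB_nondeg : (dotB).Nondegenerate := by
  refine (LinearMap.IsRefl.nondegenerate_iff_separatingLeft dotB_refl).mpr ?_
  intro x hx
  funext i
  have h := hx (Pi.single i 1 : Fin 40 → ZMod 2)
  rw [dotB_apply] at h
  have hs : ∑ i', x i' * (Pi.single i 1 : Fin 40 → ZMod 2) i' = x i := by
    rw [Finset.sum_eq_single i]
    · simp
    · intro b _ hb; simp [Pi.single_apply, hb]
    · intro hb; exact absurd (Finset.mem_univ i) hb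
  rw [hs] at h
  exact h

lemma finrank_pi40 : Module.finrank (ZMod 2) (Fin 40 → ZMod 2) = 40 := by
  simp [Module.finrank_pi]

end Final

/-- If C is a Type II self-dual additive (10,2¹⁰) code over GF(4) of
minimum weight 4, then ρ_B(C) is a doubly-even self-dual binary [40,20,8] code. -/
theorem stmt_1 (F : Type) [Field F] [Fintype F] [DecidableEq F]
    (hF : Fintype.card F = 4) (ω : F) (hω : ω ^ 2 = ω + 1)
    (C : Set (Fin 10 → F))
    (hzero : (0 : Fin 10 → F) ∈ C)
    (hadd : ∀ u ∈ C, ∀ v ∈ C, u + v ∈ C)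
    (hcard : Nat.card C = 2 ^ 10)
    (hsd : C = addDual C)
    (hII : ∀ v ∈ C, Even (hammingNorm v))
    (hminlb : ∀ v ∈ C, v ≠ 0 → 4 ≤ hammingNorm v)
    (hminex : ∃ v ∈ C, hammingNorm v = 4) :
    ((Submodule.span (ZMod 2) (rhoB ω C) : Set (Fin 40 → ZMod 2)) = rhoB ω C ∧
      Module.finrank (ZMod 2) (Submodule.span (ZMod 2) (rhoB ω C)) = 20) ∧
    rhoB ω C = binDual (rhoB ω C) ∧
    (∀ v ∈ rhoB ω C, 4 ∣ hammingNorm v) ∧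
    (∀ v ∈ rhoB ω C, v ≠ 0 → 8 ≤ hammingNorm v) ∧
    (∃ v ∈ rhoB ω C, hammingNorm v = 8) := by
  classical
  have htr : ∀ c ∈ C, ∀ c' ∈ C, traceIP c c' = 0 := by
    intro c hc c' hc'
    have h : c ∈ addDual C := hsd ▸ hc
    exact h c' hc'
  set M : Submodule (ZMod 2) (Fin 40 → ZMod 2) :=
    { carrier := rhoB ω C
      add_mem' := fun hv hw => rhoB_add_mem ω hω hF hadd hv hw
      zero_mem' := rhoB_zero_mem ω hzero
      smul_mem' := by
        intro r x hx
        rcases zmod2_cases r with h|h <;> subst h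
        · rw [zero_smul]; exact rhoB_zero_mem ω hzero
        · rw [one_smul]; exact hx } with hMdef
  have hM : (M : Set (Fin 40 → ZMod 2)) = rhoB ω C := rfl
  have hfr : Module.finrank (ZMod 2) M = 20 := by
    haveI : Fintype ↥M := Fintype.ofFinite _
    have hc1 : Fintype.card ↥M = 2 ^ 20 := by
      rw [← Nat.card_eq_fintype_card]
      have h : Nat.card ↥M = Nat.card ↥(rhoB ω C) := rfl
      rw [h, card_rhoB ω hω hF hcard]
    have h2 := Module.card_eq_pow_finrank (K := ZMod 2) (V := ↥M)
    rw [hc1, ZMod.card] at h2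
    exact (Nat.pow_right_injective (le_refl 2) h2.symm)
  have hle : M ≤ (dotB).orthogonal M := by
    intro x hx n hn
    exact dot_rhoB ω hω hF htr hn hx
  have horth : Module.finrank (ZMod 2) ((dotB).orthogonal M) = 20 := by
    rw [LinearMap.BilinForm.finrank_orthogonal dotB_nondeg M, finrank_pi40, hfr]
  have hMeq : M = (dotB).orthogonal M :=
    Submodule.eq_of_le_of_finrank_le hle (le_of_eq (by rw [horth, hfr]))
  have hdual : rhoB ω C = binDual (rhoB ω C) := by
    ext x
    constructor
    · intro hx c hc
      exact dot_rhoB ω hω hF htr hx hc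
    · intro hx
      have hxo : x ∈ (dotB).orthogonal M := by
        intro n hn
        show dotB n x = 0
        rw [dotB_apply, Finset.sum_congr rfl fun i _ => mul_comm (n i) (x i)]
        exact hx n hn
      rw [← hMeq] at hxo
      exact hxo
  refine ⟨⟨?_, ?_⟩, hdual, ?_, ?_, ?_⟩
  · rw [← hM, Submodule.span_eq]
  · rw [← hM, Submodule.span_eq]; exact hfr
  · intro v hv; exact rhoB_doubly_even ω hω hF htr hII hv
  · intro v hv hv0; exact rhoB_min_weight ω hω hF hminlb hv hv0
  · exact rhoB_exists_eight ω hω hF hminex
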